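/- Let A ∈ M_n and α ∈ [0, π/2). If the numerical range W(A) is contained in the sector S_α = {z ∈ ℂ : Re z ≥ 0, |Im z| ≤ (Re z) tan α}, then the block matrix [[sec(α)·Re A, A*],[A, sec(α)·Re A]] is positive semidefinite. -/

import Mathlib

open Matrix Set ComplexOrder

variable {m : Type*}

/-- The modulus `|X| = (XᴴX)^{1/2}` of a matrix. -/
noncomputable def matAbs [Fintype m] [DecidableEq m] (X : Matrix m m ℂ) : Matrix m m ℂ :=
  ((Matrix.posSemidef_conjTranspose_mul_self X).isHermitian.eigenvectorUnitary : Matrix m m ℂ) *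
    Matrix.diagonal (fun i => ((Real.sqrt
      ((Matrix.posSemidef_conjTranspose_mul_self X).isHermitian.eigenvalues i) : ℝ) : ℂ)) *
    star ((Matrix.posSemidef_conjTranspose_mul_self X).isHermitian.eigenvectorUnitary : Matrix m m ℂ)

theorem matAbs_posSemidef [Fintype m] [DecidableEq m] (X : Matrix m m ℂ) :
    (matAbs X).PosSemidef :=
  (Matrix.posSemidef_diagonal_iff.mpr (fun i => Complex.zero_le_real.mpr (Real.sqrt_nonneg _))).mul_mul_conjTranspose_same _

/-- Functional calculus: apply `f : ℝ → ℝ` to a Hermitian matrix via its spectral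
decomposition (junk value `0` for non-Hermitian input). -/
noncomputable def matFun [Fintype m] [DecidableEq m] (f : ℝ → ℝ) (X : Matrix m m ℂ) :
    Matrix m m ℂ :=
  if h : X.IsHermitian then
    (h.eigenvectorUnitary : Matrix m m ℂ) *
      Matrix.diagonal (fun i => (f (h.eigenvalues i) : ℂ)) *
      star (h.eigenvectorUnitary : Matrix m m ℂ)
  else 0

/-- Real part `Re A = (A + Aᴴ)/2`. -/
noncomputable def reM (A : Matrix m m ℂ) : Matrix m m ℂ := (1/2 : ℂ) • (A + Aᴴ)

/-- Imaginary part `Im A = (A - Aᴴ)/(2i)`. -/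
noncomputable def imM (A : Matrix m m ℂ) : Matrix m m ℂ := (1/(2*Complex.I)) • (A - Aᴴ)

/-- Numerical range `W(A) = {x* A x : x*x = 1}`. -/
def numRange [Fintype m] (A : Matrix m m ℂ) : Set ℂ :=
  {z | ∃ x : m → ℂ, star x ⬝ᵥ x = 1 ∧ z = star x ⬝ᵥ A.mulVec x}

/-- The sector `S_α = {z : Re z ≥ 0, |Im z| ≤ (Re z) tan α}`. -/
def sector (α : ℝ) : Set ℂ := {z | 0 ≤ z.re ∧ |z.im| ≤ z.re * Real.tan α}



section Helpers
variable {n : ℕ}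

open scoped MatrixOrder in
lemma psd_exists_root {n : ℕ} {P : Matrix (Fin n) (Fin n) ℂ} (hP : P.PosSemidef) :
    ∃ B : Matrix (Fin n) (Fin n) ℂ, P = star B * B :=
  CStarAlgebra.nonneg_iff_eq_star_mul_self.mp hP.nonneg

noncomputable def psdRoot {n : ℕ} {P : Matrix (Fin n) (Fin n) ℂ} (hP : P.PosSemidef) :
    Matrix (Fin n) (Fin n) ℂ :=
  Classical.choose (psd_exists_root hP)

lemma sqrt_form {n : ℕ} {P : Matrix (Fin n) (Fin n) ℂ} (hP : P.PosSemidef) (u w : Fin n → ℂ) :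
    star u ⬝ᵥ P *ᵥ w = star (psdRoot hP *ᵥ u) ⬝ᵥ (psdRoot hP *ᵥ w) := by
  have hB := Classical.choose_spec (psd_exists_root hP)
  rw [star_mulVec, ← dotProduct_mulVec, mulVec_mulVec, ← star_eq_conjTranspose]
  rw [psdRoot, ← hB]


lemma psd_cs {n : ℕ} {P : Matrix (Fin n) (Fin n) ℂ} (hP : P.PosSemidef) (u w : Fin n → ℂ) :
    ‖star u ⬝ᵥ P *ᵥ w‖ ≤
      Real.sqrt ((star u ⬝ᵥ P *ᵥ u).re * (star w ⬝ᵥ P *ᵥ w).re) := by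
  rw [sqrt_form hP u w, sqrt_form hP u u, sqrt_form hP w w]
  set a : EuclideanSpace ℂ (Fin n) := WithLp.toLp 2 (psdRoot hP *ᵥ u)
  set b : EuclideanSpace ℂ (Fin n) := WithLp.toLp 2 (psdRoot hP *ᵥ w)
  have h1 : star (psdRoot hP *ᵥ u) ⬝ᵥ (psdRoot hP *ᵥ w) = inner ℂ a b :=
    dotProduct_comm _ _
  have h2 : star (psdRoot hP *ᵥ u) ⬝ᵥ (psdRoot hP *ᵥ u) = inner ℂ a a :=
    dotProduct_comm _ _
  have h3 : star (psdRoot hP *ᵥ w) ⬝ᵥ (psdRoot hP *ᵥ w) = inner ℂ b b :=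
    dotProduct_comm _ _
  rw [h1, h2, h3]
  calc ‖inner ℂ a b‖ = ‖(inner ℂ a b : ℂ)‖ := rfl
    _ ≤ ‖a‖ * ‖b‖ := norm_inner_le_norm a b
    _ = Real.sqrt ((inner ℂ a a : ℂ).re * (inner ℂ b b : ℂ).re) := by
        rw [norm_eq_sqrt_re_inner (𝕜 := ℂ) a, norm_eq_sqrt_re_inner (𝕜 := ℂ) b,
          ← Real.sqrt_mul inner_self_nonneg]
        rfl


lemma adj_form {n : ℕ} (A : Matrix (Fin n) (Fin n) ℂ) (u w : Fin n → ℂ) :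
    star u ⬝ᵥ Aᴴ *ᵥ w = starRingEnd ℂ (star w ⬝ᵥ A *ᵥ u) := by
  have : star w ⬝ᵥ A *ᵥ u = star (star (A *ᵥ u) ⬝ᵥ w) := star_dotProduct _ _
  rw [this, starRingEnd_apply, star_star, star_mulVec, dotProduct_mulVec]


lemma scaled_sector {n : ℕ} {A : Matrix (Fin n) (Fin n) ℂ} {α : ℝ}
    (hA : numRange A ⊆ sector α) (x : Fin n → ℂ) :
    0 ≤ (star x ⬝ᵥ A *ᵥ x).re ∧
      |(star x ⬝ᵥ A *ᵥ x).im| ≤ (star x ⬝ᵥ A *ᵥ x).re * Real.tan α := by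
  by_cases hx : x = 0
  · simp [hx]
  · set x' : EuclideanSpace ℂ (Fin n) := WithLp.toLp 2 x with hx'
    have hxx : star x ⬝ᵥ x = ((‖x'‖ : ℂ))^2 := by
      rw [dotProduct_comm, ← EuclideanSpace.inner_toLp_toLp, inner_self_eq_norm_sq_to_K]
      rfl
    have hnorm : (0:ℝ) < ‖x'‖ := by
      simp only [norm_pos_iff]
      simpa [hx'] using hx
    set r : ℝ := ‖x'‖ with hr
    set c : ℂ := ((r⁻¹ : ℝ) : ℂ) with hc
    have hunit : star (c • x) ⬝ᵥ (c • x) = 1 := by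
      rw [star_smul, smul_dotProduct, dotProduct_smul, hxx]
      simp only [smul_eq_mul, star_trivial, hc]
      rw [Complex.star_def, Complex.conj_ofReal]
      push_cast
      field_simp
    have hmem := hA ⟨c • x, hunit, rfl⟩
    have hform : star (c • x) ⬝ᵥ A *ᵥ (c • x) = ((r^2)⁻¹ : ℝ) • (star x ⬝ᵥ A *ᵥ x) := by
      rw [mulVec_smul, star_smul, smul_dotProduct, dotProduct_smul]
      simp only [smul_eq_mul, star_trivial, hc, Complex.real_smul]
      rw [Complex.star_def, Complex.conj_ofReal]
      push_cast
      ring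
    rw [hform] at hmem
    obtain ⟨h1, h2⟩ := hmem
    have hre : (((r^2)⁻¹ : ℝ) • (star x ⬝ᵥ A *ᵥ x)).re = (r^2)⁻¹ * (star x ⬝ᵥ A *ᵥ x).re :=
      Complex.smul_re _ _
    have him : (((r^2)⁻¹ : ℝ) • (star x ⬝ᵥ A *ᵥ x)).im = (r^2)⁻¹ * (star x ⬝ᵥ A *ᵥ x).im :=
      Complex.smul_im _ _
    rw [hre] at h1 h2
    rw [him] at h2
    have hr2 : (0:ℝ) < r^2 := by positivity
    have hcancel : r^2 * (r^2)⁻¹ = 1 := mul_inv_cancel₀ (ne_of_gt hr2)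
    rw [abs_mul, abs_of_pos (by positivity : (0:ℝ) < (r^2)⁻¹)] at h2
    constructor
    · nlinarith
    · nlinarith


lemma scalar_plus (t : ℝ) (z : ℂ) :
    ((t : ℂ) - Complex.I)/2 * z + ((t : ℂ) + Complex.I)/2 * (starRingEnd ℂ z)
      = ((t * z.re + z.im : ℝ) : ℂ) := by
  apply Complex.ext <;>
    simp [Complex.div_re, Complex.div_im, Complex.mul_re, Complex.mul_im, Complex.normSq] <;> ring


lemma scalar_minus (t : ℝ) (z : ℂ) :
    ((t : ℂ) + Complex.I)/2 * z + ((t : ℂ) - Complex.I)/2 * (starRingEnd ℂ z)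
      = ((t * z.re - z.im : ℝ) : ℂ) := by
  apply Complex.ext <;>
    simp [Complex.div_re, Complex.div_im, Complex.mul_re, Complex.mul_im, Complex.normSq] <;> ring


lemma scalar_cross (t : ℝ) (z1 z2 : ℂ) :
    (((t:ℂ) + Complex.I)/2 * z1 + ((t:ℂ) - Complex.I)/2 * (starRingEnd ℂ z2)).im -
      (((t:ℂ) - Complex.I)/2 * z1 + ((t:ℂ) + Complex.I)/2 * (starRingEnd ℂ z2)).im
      = z1.re - z2.re := by
  simp [Complex.div_im, Complex.mul_im, Complex.normSq]
  ring


lemma am_gm (c d : ℝ) (hc : 0 ≤ c) (hd : 0 ≤ d) : 2 * Real.sqrt (c * d) ≤ c + d := by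
  rw [Real.sqrt_mul hc]
  nlinarith [sq_nonneg (Real.sqrt c - Real.sqrt d), Real.sq_sqrt hc, Real.sq_sqrt hd,
    Real.sqrt_nonneg c, Real.sqrt_nonneg d]


lemma sqrt_add_sqrt (p q p' q' : ℝ) (hp : 0 ≤ p) (hq : 0 ≤ q) (hp' : 0 ≤ p') (hq' : 0 ≤ q') :
    Real.sqrt (p * p') + Real.sqrt (q * q') ≤ Real.sqrt ((p + q) * (p' + q')) := by
  rw [show p * p' = Real.sqrt p ^2 * Real.sqrt p' ^2 by rw [Real.sq_sqrt hp, Real.sq_sqrt hp']]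
  rw [show q * q' = Real.sqrt q ^2 * Real.sqrt q' ^2 by rw [Real.sq_sqrt hq, Real.sq_sqrt hq']]
  rw [← mul_pow, ← mul_pow, Real.sqrt_sq (by positivity), Real.sqrt_sq (by positivity)]
  rw [Real.le_sqrt (by positivity) (by positivity)]
  have h := Real.sq_sqrt (show (0:ℝ) ≤ (p+q)*(p'+q') by positivity)
  nlinarith [sq_nonneg (Real.sqrt p * Real.sqrt q' - Real.sqrt q * Real.sqrt p'),
    Real.sq_sqrt hp, Real.sq_sqrt hq, Real.sq_sqrt hp', Real.sq_sqrt hq',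
    Real.sqrt_nonneg ((p+q)*(p'+q'))]

end Helpers

theorem sector_implies_sec_block_psd {n : ℕ} (A : Matrix (Fin n) (Fin n) ℂ) (α : ℝ)
    (hα₀ : 0 ≤ α) (hα₁ : α < Real.pi / 2) (hA : numRange A ⊆ sector α) :
    (Matrix.fromBlocks ((Real.cos α)⁻¹ • reM A) Aᴴ A ((Real.cos α)⁻¹ • reM A)).PosSemidef := by
  have hπ := Real.pi_pos
  set t := Real.tan α with htdef
  set s := (Real.cos α)⁻¹ with hsdef
  have hcos : 0 < Real.cos α := Real.cos_pos_of_mem_Ioo ⟨by linarith, hα₁⟩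
  have hs1 : 1 ≤ s := (one_le_inv₀ hcos).mpr (Real.cos_le_one α)
  have ht0 : 0 ≤ t := Real.tan_nonneg_of_nonneg_of_le_pi_div_two hα₀ (le_of_lt hα₁)
  have hts : t ^ 2 + 1 = s ^ 2 := by
    rw [htdef, hsdef, Real.tan_eq_sin_div_cos]
    have h1 := Real.sin_sq_add_cos_sq α
    field_simp
    linarith [h1]
  have hsec := fun x => scaled_sector hA x
  -- the two auxiliary PSD matrices
  set Mp : Matrix (Fin n) (Fin n) ℂ :=
    (((t:ℂ) - Complex.I)/2) • A + (((t:ℂ) + Complex.I)/2) • Aᴴ with hMp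
  set Mm : Matrix (Fin n) (Fin n) ℂ :=
    (((t:ℂ) + Complex.I)/2) • A + (((t:ℂ) - Complex.I)/2) • Aᴴ with hMm
  have hMpform : ∀ u w : Fin n → ℂ, star u ⬝ᵥ Mp *ᵥ w =
      ((t:ℂ) - Complex.I)/2 * (star u ⬝ᵥ A *ᵥ w)
        + ((t:ℂ) + Complex.I)/2 * (starRingEnd ℂ (star w ⬝ᵥ A *ᵥ u)) := by
    intro u w
    rw [hMp, add_mulVec, smul_mulVec, smul_mulVec, dotProduct_add,
      dotProduct_smul, dotProduct_smul, smul_eq_mul, smul_eq_mul, adj_form]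
  have hMmform : ∀ u w : Fin n → ℂ, star u ⬝ᵥ Mm *ᵥ w =
      ((t:ℂ) + Complex.I)/2 * (star u ⬝ᵥ A *ᵥ w)
        + ((t:ℂ) - Complex.I)/2 * (starRingEnd ℂ (star w ⬝ᵥ A *ᵥ u)) := by
    intro u w
    rw [hMm, add_mulVec, smul_mulVec, smul_mulVec, dotProduct_add,
      dotProduct_smul, dotProduct_smul, smul_eq_mul, smul_eq_mul, adj_form]
  have hMpdiag : ∀ x : Fin n → ℂ, star x ⬝ᵥ Mp *ᵥ x =
      ((t * (star x ⬝ᵥ A *ᵥ x).re + (star x ⬝ᵥ A *ᵥ x).im : ℝ) : ℂ) := by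
    intro x; rw [hMpform]; exact scalar_plus t _
  have hMmdiag : ∀ x : Fin n → ℂ, star x ⬝ᵥ Mm *ᵥ x =
      ((t * (star x ⬝ᵥ A *ᵥ x).re - (star x ⬝ᵥ A *ᵥ x).im : ℝ) : ℂ) := by
    intro x; rw [hMmform]; exact scalar_minus t _
  have hstar1 : star (((t:ℂ) - Complex.I)/2) = ((t:ℂ) + Complex.I)/2 := by
    simp [Complex.star_def, map_div₀, Complex.conj_ofReal]
  have hstar2 : star (((t:ℂ) + Complex.I)/2) = ((t:ℂ) - Complex.I)/2 := by
    simp [Complex.star_def, map_div₀, Complex.conj_ofReal]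
    ring
  have hMpherm : Mp.IsHermitian := by
    show Mpᴴ = Mp
    rw [hMp, conjTranspose_add, conjTranspose_smul, conjTranspose_smul,
      conjTranspose_conjTranspose, hstar1, hstar2, add_comm]
  have hMmherm : Mm.IsHermitian := by
    show Mmᴴ = Mm
    rw [hMm, conjTranspose_add, conjTranspose_smul, conjTranspose_smul,
      conjTranspose_conjTranspose, hstar1, hstar2, add_comm]
  have hMpPSD : Mp.PosSemidef := by
    refine PosSemidef.of_dotProduct_mulVec_nonneg hMpherm fun x => ?_
    rw [hMpdiag x, Complex.zero_le_real]
    have h1 := (hsec x).1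
    have h2 := abs_le.mp (hsec x).2
    linarith [h2.1]
  have hMmPSD : Mm.PosSemidef := by
    refine PosSemidef.of_dotProduct_mulVec_nonneg hMmherm fun x => ?_
    rw [hMmdiag x, Complex.zero_le_real]
    have h1 := (hsec x).1
    have h2 := abs_le.mp (hsec x).2
    linarith [h2.2]
  -- Hermitian parts
  have hHherm : (reM A).IsHermitian := by
    show (reM A)ᴴ = reM A
    rw [reM, conjTranspose_smul, conjTranspose_add, conjTranspose_conjTranspose]
    have : star (1/2 : ℂ) = (1/2 : ℂ) := by
      simp [Complex.star_def]
    rw [this, add_comm]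
  have hCherm : ((Real.cos α)⁻¹ • reM A).IsHermitian := by
    show _ᴴ = _
    rw [conjTranspose_smul, star_trivial, hHherm.eq]
  refine PosSemidef.of_dotProduct_mulVec_nonneg ?_ fun v => ?_
  · rw [isHermitian_fromBlocks_iff]
    exact ⟨hCherm, conjTranspose_conjTranspose A, rfl, hCherm⟩
  · set x := v ∘ Sum.inl with hxdef
    set y := v ∘ Sum.inr with hydef
    rw [← Sum.elim_comp_inl_inr v]
    have hC : ∀ z : Fin n → ℂ, star z ⬝ᵥ (s • reM A) *ᵥ z
        = ((s * (star z ⬝ᵥ A *ᵥ z).re : ℝ) : ℂ) := by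
      intro z
      have h1 : star z ⬝ᵥ (reM A) *ᵥ z = (((star z ⬝ᵥ A *ᵥ z).re : ℝ) : ℂ) := by
        rw [reM, smul_mulVec, dotProduct_smul, add_mulVec, dotProduct_add, adj_form,
          Complex.add_conj]
        rw [smul_eq_mul]
        push_cast
        ring
      rw [smul_mulVec, dotProduct_smul, h1, Complex.real_smul, ← Complex.ofReal_mul]
    have hform : star (Sum.elim x y) ⬝ᵥ
        (fromBlocks (s • reM A) Aᴴ A (s • reM A)) *ᵥ Sum.elim x y
        = ((s * (star x ⬝ᵥ A *ᵥ x).re + s * (star y ⬝ᵥ A *ᵥ y).re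
            + 2 * (star y ⬝ᵥ A *ᵥ x).re : ℝ) : ℂ) := by
      simp only [Function.star_sumElim, fromBlocks_mulVec, sumElim_dotProduct_sumElim,
        Sum.elim_comp_inl, Sum.elim_comp_inr, dotProduct_add]
      rw [hC x, hC y, adj_form]
      apply Complex.ext <;> simp <;> ring
    rw [hform, Complex.zero_le_real]
    -- bilinear expansions
    have idA : star (x + y) ⬝ᵥ A *ᵥ (x + y)
        = star x ⬝ᵥ A *ᵥ x + star x ⬝ᵥ A *ᵥ y + star y ⬝ᵥ A *ᵥ x + star y ⬝ᵥ A *ᵥ y := by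
      simp only [star_add, add_dotProduct, mulVec_add, dotProduct_add]
      ring
    have idB : star (x - y) ⬝ᵥ A *ᵥ (x - y)
        = star x ⬝ᵥ A *ᵥ x - star x ⬝ᵥ A *ᵥ y - star y ⬝ᵥ A *ᵥ x + star y ⬝ᵥ A *ᵥ y := by
      simp only [star_sub, sub_dotProduct, mulVec_sub, dotProduct_sub]
      ring
    have idC : star (x + y) ⬝ᵥ A *ᵥ (x - y)
        = star x ⬝ᵥ A *ᵥ x - star x ⬝ᵥ A *ᵥ y + star y ⬝ᵥ A *ᵥ x - star y ⬝ᵥ A *ᵥ y := by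
      simp only [star_add, add_dotProduct, mulVec_sub, dotProduct_sub]
      ring
    have idD : star (x - y) ⬝ᵥ A *ᵥ (x + y)
        = star x ⬝ᵥ A *ᵥ x + star x ⬝ᵥ A *ᵥ y - star y ⬝ᵥ A *ᵥ x - star y ⬝ᵥ A *ᵥ y := by
      simp only [star_sub, sub_dotProduct, mulVec_add, dotProduct_add]
      ring
    have hsu := hsec (x + y)
    have hsw := hsec (x - y)
    set ax := (star x ⬝ᵥ A *ᵥ x).re with haxd
    set ay := (star y ⬝ᵥ A *ᵥ y).re with hayd
    set P := (star x ⬝ᵥ A *ᵥ y).re with hPd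
    set Q := (star y ⬝ᵥ A *ᵥ x).re with hQd
    set au := (star (x + y) ⬝ᵥ A *ᵥ (x + y)).re with haud
    set ju := (star (x + y) ⬝ᵥ A *ᵥ (x + y)).im with hjud
    set aw := (star (x - y) ⬝ᵥ A *ᵥ (x - y)).re with hawd
    set jw := (star (x - y) ⬝ᵥ A *ᵥ (x - y)).im with hjwd
    set cu := (star (x + y) ⬝ᵥ A *ᵥ (x - y)).re with hcud
    set cw := (star (x - y) ⬝ᵥ A *ᵥ (x + y)).re with hcwd
    have e1 : au = ax + P + Q + ay := by
      rw [haud, haxd, hPd, hQd, hayd, idA]; simp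
    have e2 : aw = ax - P - Q + ay := by
      rw [hawd, haxd, hPd, hQd, hayd, idB]; simp
    have e3 : cu = ax - P + Q - ay := by
      rw [hcud, haxd, hPd, hQd, hayd, idC]; simp
    have e4 : cw = ax + P - Q - ay := by
      rw [hcwd, haxd, hPd, hQd, hayd, idD]; simp
    have hau0 : 0 ≤ au := hsu.1
    have haw0 : 0 ≤ aw := hsw.1
    have hju := abs_le.mp hsu.2
    have hjw := abs_le.mp hsw.2
    have hpu : 0 ≤ t * au + ju := by linarith [hju.1]
    have hqu : 0 ≤ t * au - ju := by linarith [hju.2]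
    have hpw : 0 ≤ t * aw + jw := by linarith [hjw.1]
    have hqw : 0 ≤ t * aw - jw := by linarith [hjw.2]
    -- diagonal values of Mp and Mm
    have d1 : (star (x + y) ⬝ᵥ Mp *ᵥ (x + y)).re = t * au + ju := by
      rw [hMpdiag (x + y), Complex.ofReal_re, haud, hjud]
    have d2 : (star (x - y) ⬝ᵥ Mp *ᵥ (x - y)).re = t * aw + jw := by
      rw [hMpdiag (x - y), Complex.ofReal_re, hawd, hjwd]
    have d3 : (star (x + y) ⬝ᵥ Mm *ᵥ (x + y)).re = t * au - ju := by
      rw [hMmdiag (x + y), Complex.ofReal_re, haud, hjud]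
    have d4 : (star (x - y) ⬝ᵥ Mm *ᵥ (x - y)).re = t * aw - jw := by
      rw [hMmdiag (x - y), Complex.ofReal_re, hawd, hjwd]
    have habsp : |(star (x + y) ⬝ᵥ Mp *ᵥ (x - y)).im| ≤
        Real.sqrt ((t * au + ju) * (t * aw + jw)) :=
      (Complex.abs_im_le_norm _).trans ((psd_cs hMpPSD _ _).trans
        (le_of_eq (by rw [d1, d2])))
    have habsm : |(star (x + y) ⬝ᵥ Mm *ᵥ (x - y)).im| ≤
        Real.sqrt ((t * au - ju) * (t * aw - jw)) :=
      (Complex.abs_im_le_norm _).trans ((psd_cs hMmPSD _ _).trans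
        (le_of_eq (by rw [d3, d4])))
    have hcross : (star (x + y) ⬝ᵥ Mm *ᵥ (x - y)).im
        - (star (x + y) ⬝ᵥ Mp *ᵥ (x - y)).im = cu - cw := by
      rw [hMmform, hMpform, scalar_cross, hcud, hcwd]
    have hb2 := sqrt_add_sqrt _ _ _ _ hpu hqu hpw hqw
    have hb3 : ((t * au + ju) + (t * au - ju)) * ((t * aw + jw) + (t * aw - jw))
        = 4 * (((s + 1) * au) * ((s - 1) * aw)) := by
      linear_combination (4 * au * aw) * hts
    rw [hb3] at hb2
    have hb4 : Real.sqrt (4 * (((s + 1) * au) * ((s - 1) * aw)))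
        = 2 * Real.sqrt (((s + 1) * au) * ((s - 1) * aw)) := by
      rw [show (4:ℝ) * (((s + 1) * au) * ((s - 1) * aw))
          = 2 ^ 2 * (((s + 1) * au) * ((s - 1) * aw)) from by ring,
        Real.sqrt_mul (by positivity), Real.sqrt_sq (by norm_num : (0:ℝ) ≤ 2)]
    rw [hb4] at hb2
    have hb5 : 2 * Real.sqrt (((s + 1) * au) * ((s - 1) * aw)) ≤ (s + 1) * au + (s - 1) * aw :=
      am_gm _ _ (mul_nonneg (by linarith) hau0) (mul_nonneg (by linarith) haw0)
    have h1 := neg_abs_le ((star (x + y) ⬝ᵥ Mm *ᵥ (x - y)).im)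
    have h2 := le_abs_self ((star (x + y) ⬝ᵥ Mp *ᵥ (x - y)).im)
    have hfinal : 0 ≤ (s + 1) * au + (s - 1) * aw + (cu - cw) := by
      linarith [habsp, habsm, hb2, hb5, hcross, h1, h2]
    rw [e1, e2, e3, e4] at hfinal
    linarith [hfinal]
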